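/- In the graph G, for all a≠b in {1,…,n} and all i,j∈{1,…,d}: d(u_{a,i}, u'_{b,j}) = (2d+1−|i−j|)·M + v_a[i] + v_b[j]. In particular, for i=j this distance equals (2d+1)·M + v_a[i] + v_b[i], while for i≠j it is at most 2d·M + 2. -/
import Mathlib


open Finset

namespace OVGadget

inductive V (n d : ℕ) : Type
  | U : Fin n → Fin d → V n d
  | U' : Fin n → Fin d → V n d
  | l : V n d
  | r : V n d
  deriving DecidableEq, Fintype

def M : ℕ := 4

/-- One-directional edge-weight table encoding the vectors `v_1, …, v_n`; a value `0` means
"no edge".  Here `j : Fin d` is 0-indexed, so `U k j` is the paper's `u_{k+1, j+1}`, whence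
the weights `(j+1)·M + v_k[j]` and `(2d+1−(j+1))·M + v_k[j] = (2d−j)·M + v_k[j]`. -/
def wt0 (n d : ℕ) (v : Fin n → Fin d → Fin 2) : V n d → V n d → ℕ
  | V.U k j, V.l => (j.val + 1) * M + (v k j).val
  | V.U' k j, V.l => (2 * d - j.val) * M + (v k j).val
  | V.U k j, V.r => (2 * d - j.val) * M + (v k j).val
  | V.U' k j, V.r => (j.val + 1) * M + (v k j).val
  | _, _ => 0

/-- The symmetrized edge weight. -/
def wtE (n d : ℕ) (v : Fin n → Fin d → Fin 2) (x y : V n d) : ℕ :=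
  wt0 n d v x y + wt0 n d v y x

/-- The graph `G`: `x` and `y` are adjacent iff the weight table records an edge. -/
def G (n d : ℕ) (v : Fin n → Fin d → Fin 2) : SimpleGraph (V n d) :=
  SimpleGraph.fromRel fun x y => wt0 n d v x y ≠ 0

/-- The total weight of a walk. -/
def wWeight {n d : ℕ} {v : Fin n → Fin d → Fin 2} {x y : V n d}
    (p : (G n d v).Walk x y) : ℕ :=
  (p.darts.map fun e => wtE n d v e.toProd.1 e.toProd.2).sum

/-- The weighted shortest-path distance: the minimum over paths from `x` to `y` of the sum
of the edge weights along the path. -/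
noncomputable def dist (n d : ℕ) (v : Fin n → Fin d → Fin 2) (x y : V n d) : ℕ :=
  sInf {m | ∃ p : (G n d v).Walk x y, p.IsPath ∧ wWeight p = m}

/-- Membership in the set `S_k = {u_{k,j}, u'_{k,j} : j}`. -/
def inS (n d : ℕ) (k : Fin n) (x : V n d) : Prop :=
  (∃ j : Fin d, x = V.U k j) ∨ (∃ j : Fin d, x = V.U' k j)

/-- The set `S_k` as a finite set of vertices. -/
def SF (n d : ℕ) (k : Fin n) : Finset (V n d) :=
  (Finset.univ.image fun j : Fin d => V.U k j)
    ∪ (Finset.univ.image fun j : Fin d => V.U' k j)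

/-- `Max-Dist(S_a, S_b) = max_{x ∈ S_a, y ∈ S_b} d(x, y)`. -/
noncomputable def maxDist (n d : ℕ) (v : Fin n → Fin d → Fin 2) (a b : Fin n) : ℕ :=
  (SF n d a ×ˢ SF n d b).sup fun p => dist n d v p.1 p.2
variable {n d : ℕ} {v : Fin n → Fin d → Fin 2}

lemma wWeight_cons {x y z : V n d} (h : (G n d v).Adj x y) (p : (G n d v).Walk y z) :
    wWeight (SimpleGraph.Walk.cons h p) = wtE n d v x y + wWeight p := by
  simp [wWeight]

lemma wWeight_nil {x : V n d} : wWeight (SimpleGraph.Walk.nil : (G n d v).Walk x x) = 0 := rfl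

lemma wtE_Ul (k : Fin n) (j : Fin d) : wtE n d v (V.U k j) V.l = (j.val+1)*M + (v k j).val := by
  simp [wtE, wt0]
lemma wtE_lU (k : Fin n) (j : Fin d) : wtE n d v V.l (V.U k j) = (j.val+1)*M + (v k j).val := by
  simp [wtE, wt0]
lemma wtE_Ur (k : Fin n) (j : Fin d) : wtE n d v (V.U k j) V.r = (2*d - j.val)*M + (v k j).val := by
  simp [wtE, wt0]
lemma wtE_rU (k : Fin n) (j : Fin d) : wtE n d v V.r (V.U k j) = (2*d - j.val)*M + (v k j).val := by
  simp [wtE, wt0]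
lemma wtE_U'l (k : Fin n) (j : Fin d) : wtE n d v (V.U' k j) V.l = (2*d - j.val)*M + (v k j).val := by
  simp [wtE, wt0]
lemma wtE_lU' (k : Fin n) (j : Fin d) : wtE n d v V.l (V.U' k j) = (2*d - j.val)*M + (v k j).val := by
  simp [wtE, wt0]
lemma wtE_U'r (k : Fin n) (j : Fin d) : wtE n d v (V.U' k j) V.r = (j.val+1)*M + (v k j).val := by
  simp [wtE, wt0]
lemma wtE_rU' (k : Fin n) (j : Fin d) : wtE n d v V.r (V.U' k j) = (j.val+1)*M + (v k j).val := by
  simp [wtE, wt0]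

lemma wt0_shape {x y : V n d} (h : wt0 n d v x y ≠ 0) :
    (x ≠ V.l ∧ x ≠ V.r) ∧ (y = V.l ∨ y = V.r) := by
  cases x <;> cases y <;> simp_all [wt0]

lemma adj_shape {x y : V n d} (h : (G n d v).Adj x y) :
    ((x ≠ V.l ∧ x ≠ V.r) ∧ (y = V.l ∨ y = V.r)) ∨ ((y ≠ V.l ∧ y ≠ V.r) ∧ (x = V.l ∨ x = V.r)) := by
  rw [G, SimpleGraph.fromRel_adj] at h
  rcases h with ⟨-, h | h⟩
  · exact Or.inl (wt0_shape h)
  · exact Or.inr (wt0_shape h)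

lemma adj_Ul (k : Fin n) (j : Fin d) : (G n d v).Adj (V.U k j) V.l := by
  rw [G, SimpleGraph.fromRel_adj]
  refine ⟨by simp, Or.inl ?_⟩
  simp only [wt0, M]; omega

lemma adj_Ur (k : Fin n) (j : Fin d) : (G n d v).Adj (V.U k j) V.r := by
  rw [G, SimpleGraph.fromRel_adj]
  refine ⟨by simp, Or.inl ?_⟩
  have := j.isLt
  simp only [wt0, M]; omega

lemma adj_U'l (k : Fin n) (j : Fin d) : (G n d v).Adj (V.U' k j) V.l := by
  rw [G, SimpleGraph.fromRel_adj]
  refine ⟨by simp, Or.inl ?_⟩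
  have := j.isLt
  simp only [wt0, M]; omega

lemma adj_U'r (k : Fin n) (j : Fin d) : (G n d v).Adj (V.U' k j) V.r := by
  rw [G, SimpleGraph.fromRel_adj]
  refine ⟨by simp, Or.inl ?_⟩
  simp only [wt0, M]; omega


open SimpleGraph in
lemma weight_lb {a b : Fin n} {i j : Fin d} (p : (G n d v).Walk (V.U a i) (V.U' b j))
    (hp : p.IsPath) :
    (2 * d + 1 - (max i.val j.val - min i.val j.val)) * M + (v a i).val + (v b j).val
      ≤ wWeight p := by
  have hi := i.isLt; have hj := j.isLt
  cases p with
  | cons h q =>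
    rename_i t
    have ht : t = V.l ∨ t = V.r := by
      rcases adj_shape h with ⟨_, h1⟩ | ⟨_, h1⟩
      · exact h1
      · simp at h1
    cases q with
    | nil => simp at ht
    | cons h2 q2 =>
      rename_i z
      have hz : z ≠ V.l ∧ z ≠ V.r := by
        rcases adj_shape h2 with ⟨⟨h1, h1'⟩, _⟩ | ⟨h1, _⟩
        · rcases ht with rfl | rfl
          · exact absurd rfl h1
          · exact absurd rfl h1'
        · exact h1
      cases q2 with
      | nil =>
        rcases ht with rfl | rfl
        · rw [wWeight_cons, wWeight_cons, wWeight_nil, wtE_Ul, wtE_lU']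
          simp only [M]; omega
        · rw [wWeight_cons, wWeight_cons, wWeight_nil, wtE_Ur, wtE_rU']
          simp only [M]; omega
      | cons h3 q3 =>
        rename_i t2
        have ht2 : t2 = V.l ∨ t2 = V.r := by
          rcases adj_shape h3 with ⟨_, h1⟩ | ⟨⟨h1, h1'⟩, _⟩
          · exact h1
          · rcases hz with ⟨e1, e2⟩
            rcases ht with rfl | rfl <;> simp_all
        rw [SimpleGraph.Walk.cons_isPath_iff] at hp
        obtain ⟨hp1, hs1⟩ := hp
        rw [SimpleGraph.Walk.cons_isPath_iff] at hp1
        obtain ⟨hp2, hs2⟩ := hp1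
        rw [SimpleGraph.Walk.cons_isPath_iff] at hp2
        obtain ⟨hp3, hs3⟩ := hp2
        have htt2 : t2 ≠ t := by
          intro e
          apply hs2
          rw [SimpleGraph.Walk.support_cons]
          exact e ▸ List.mem_cons_of_mem _ q3.start_mem_support
        cases q3 with
        | nil => simp at ht2
        | cons h4 q4 =>
          rename_i z2
          have hz2 : z2 ≠ V.l ∧ z2 ≠ V.r := by
            rcases adj_shape h4 with ⟨⟨h1, h1'⟩, _⟩ | ⟨h1, _⟩
            · rcases ht2 with rfl | rfl
              · exact absurd rfl h1
              · exact absurd rfl h1'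
            · exact h1
          cases q4 with
          | nil =>
            rcases ht with rfl | rfl <;> rcases ht2 with rfl | rfl
            · exact absurd rfl htt2
            · cases z with
              | U k' j' =>
                have := j'.isLt
                rw [wWeight_cons, wWeight_cons, wWeight_cons, wWeight_cons, wWeight_nil,
                  wtE_Ul, wtE_lU, wtE_Ur, wtE_rU']
                simp only [M]; omega
              | U' k' j' =>
                have := j'.isLt
                rw [wWeight_cons, wWeight_cons, wWeight_cons, wWeight_cons, wWeight_nil,
                  wtE_Ul, wtE_lU', wtE_U'r, wtE_rU']
                simp only [M]; omega
              | l => exact absurd rfl hz.1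
              | r => exact absurd rfl hz.2
            · cases z with
              | U k' j' =>
                have := j'.isLt
                rw [wWeight_cons, wWeight_cons, wWeight_cons, wWeight_cons, wWeight_nil,
                  wtE_Ur, wtE_rU, wtE_Ul, wtE_lU']
                simp only [M]; omega
              | U' k' j' =>
                have := j'.isLt
                rw [wWeight_cons, wWeight_cons, wWeight_cons, wWeight_cons, wWeight_nil,
                  wtE_Ur, wtE_rU', wtE_U'l, wtE_lU']
                simp only [M]; omega
              | l => exact absurd rfl hz.1
              | r => exact absurd rfl hz.2
            · exact absurd rfl htt2
          | cons h5 q5 =>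
            rename_i t3
            exfalso
            have ht3 : t3 = V.l ∨ t3 = V.r := by
              rcases adj_shape h5 with ⟨_, h1⟩ | ⟨⟨h1, h1'⟩, _⟩
              · exact h1
              · rcases hz2 with ⟨e1, e2⟩
                rcases ht2 with rfl | rfl <;> simp_all
            rw [SimpleGraph.Walk.cons_isPath_iff] at hp3
            obtain ⟨hp4, hs4⟩ := hp3
            have h3t : t3 ≠ t := by
              intro e
              apply hs2
              rw [SimpleGraph.Walk.support_cons, SimpleGraph.Walk.support_cons,
                SimpleGraph.Walk.support_cons]
              refine e ▸ List.mem_cons_of_mem _ (List.mem_cons_of_mem _ (List.mem_cons_of_mem _ q5.start_mem_support))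
            have h3t2 : t3 ≠ t2 := by
              intro e
              apply hs4
              rw [SimpleGraph.Walk.support_cons]
              exact e ▸ List.mem_cons_of_mem _ q5.start_mem_support
            rcases ht with rfl | rfl <;> rcases ht2 with rfl | rfl <;>
              rcases ht3 with rfl | rfl <;> simp_all


/-- For `a ≠ b`: `d(u_{a,i}, u'_{b,j}) = (2d+1−|i−j|)·M + v_a[i] + v_b[j]`; in particular it
equals `(2d+1)·M + v_a[i] + v_b[i]` when `i = j` and is at most `2d·M + 2` when `i ≠ j`. -/
theorem dist_mixed_pairs (n d : ℕ) (hn : 2 ≤ n) (hd : 1 ≤ d)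
    (v : Fin n → Fin d → Fin 2) (a b : Fin n) (hab : a ≠ b) (i j : Fin d) :
    (dist n d v (V.U a i) (V.U' b j) =
      (2 * d + 1 - (max i.val j.val - min i.val j.val)) * M + (v a i).val + (v b j).val)
    ∧ (i = j → dist n d v (V.U a i) (V.U' b i) =
        (2 * d + 1) * M + (v a i).val + (v b i).val)
    ∧ (i ≠ j → dist n d v (V.U a i) (V.U' b j) ≤ 2 * d * M + 2) := by
  have hi := i.isLt
  have hj := j.isLt
  have hva := (v a i).isLt
  have hvb := (v b j).isLt
  have main : dist n d v (V.U a i) (V.U' b j) =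
      (2 * d + 1 - (max i.val j.val - min i.val j.val)) * M + (v a i).val + (v b j).val := by
    have adj1 : (G n d v).Adj (V.U a i) V.l := adj_Ul a i
    have adj2 : (G n d v).Adj V.l (V.U' b j) := (adj_U'l b j).symm
    have adj3 : (G n d v).Adj (V.U a i) V.r := adj_Ur a i
    have adj4 : (G n d v).Adj V.r (V.U' b j) := (adj_U'r b j).symm
    have hpl : (SimpleGraph.Walk.cons adj1 (SimpleGraph.Walk.cons adj2 SimpleGraph.Walk.nil)).IsPath := by
      simp [SimpleGraph.Walk.cons_isPath_iff]
    have hpr : (SimpleGraph.Walk.cons adj3 (SimpleGraph.Walk.cons adj4 SimpleGraph.Walk.nil)).IsPath := by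
      simp [SimpleGraph.Walk.cons_isPath_iff]
    have hwl : wWeight (SimpleGraph.Walk.cons adj1 (SimpleGraph.Walk.cons adj2 SimpleGraph.Walk.nil)) =
        (i.val + 1) * M + (v a i).val + ((2 * d - j.val) * M + (v b j).val) := by
      rw [wWeight_cons, wWeight_cons, wWeight_nil, wtE_Ul, wtE_lU']; omega
    have hwr : wWeight (SimpleGraph.Walk.cons adj3 (SimpleGraph.Walk.cons adj4 SimpleGraph.Walk.nil)) =
        (2 * d - i.val) * M + (v a i).val + ((j.val + 1) * M + (v b j).val) := by
      rw [wWeight_cons, wWeight_cons, wWeight_nil, wtE_Ur, wtE_rU']; omega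
    refine le_antisymm ?_ ?_
    · rcases le_total i.val j.val with hij | hij
      · have : (i.val + 1) * M + (v a i).val + ((2 * d - j.val) * M + (v b j).val) =
            (2 * d + 1 - (max i.val j.val - min i.val j.val)) * M + (v a i).val + (v b j).val := by
          simp only [M]; omega
        exact Nat.sInf_le ⟨_, hpl, hwl.trans this⟩
      · have : (2 * d - i.val) * M + (v a i).val + ((j.val + 1) * M + (v b j).val) =
            (2 * d + 1 - (max i.val j.val - min i.val j.val)) * M + (v a i).val + (v b j).val := by
          simp only [M]; omega
        exact Nat.sInf_le ⟨_, hpr, hwr.trans this⟩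
    · refine le_csInf ⟨_, _, hpl, rfl⟩ ?_
      rintro m ⟨p, hp, rfl⟩
      exact weight_lb p hp
  refine ⟨main, ?_, ?_⟩
  · rintro rfl
    simpa using main
  · intro hne
    have hij : i.val ≠ j.val := fun e => hne (Fin.ext e)
    rw [main]
    simp only [M]
    omega


end OVGadget
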